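/- For all integers k ≥ 0 the relative velocities in the Galperin billiard satisfy V_{2k} − v_{2k} = V_0·sin((2k+1)θ)/sin θ and v_{2k+1} − V_{2k+1} = V_0·sin((2k+1)θ)/sin θ, where θ = arctan(√(m/M)); in particular each ball-ball collision exactly reverses the relative velocity of the two balls. -/

import Mathlib

/-- Relative velocities in the Galperin billiard:
`V_{2k} − v_{2k} = V_0 sin((2k+1)θ)/sin θ` and
`v_{2k+1} − V_{2k+1} = V_0 sin((2k+1)θ)/sin θ`, where `θ = arctan √(m/M)`;
each ball-ball collision exactly reverses the relative velocity. -/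
theorem galperin_relative_velocity_closed_forms
    (M m : ℝ) (hM : 0 < M) (hm : 0 < m)
    (V v : ℕ → ℝ) (hV0 : 0 < V 0) (hv0 : v 0 = 0)
    (hBB : ∀ k : ℕ,
      V (2 * k + 1) = ((M - m) * V (2 * k) + 2 * m * v (2 * k)) / (M + m) ∧
      v (2 * k + 1) = (2 * M * V (2 * k) + (m - M) * v (2 * k)) / (M + m))
    (hBW : ∀ k : ℕ, 1 ≤ k →
      V (2 * k) = V (2 * k - 1) ∧ v (2 * k) = -v (2 * k - 1))
    (θ : ℝ) (hθ : θ = Real.arctan (Real.sqrt (m / M))) :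
    ∀ k : ℕ,
      V (2 * k) - v (2 * k)
        = V 0 * Real.sin ((2 * (k : ℝ) + 1) * θ) / Real.sin θ ∧
      v (2 * k + 1) - V (2 * k + 1)
        = V 0 * Real.sin ((2 * (k : ℝ) + 1) * θ) / Real.sin θ := by
  have hMm : (0:ℝ) < M + m := by linarith
  have hx : 0 < Real.sqrt (m / M) := Real.sqrt_pos.mpr (by positivity)
  have hθpos : 0 < θ := by rw [hθ]; calc (0:ℝ) = Real.arctan 0 := Real.arctan_zero.symm
    _ < _ := Real.arctan_strictMono hx
  have hθlt : θ < Real.pi / 2 := by rw [hθ]; exact Real.arctan_lt_pi_div_two _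
  have hs : 0 < Real.sin θ :=
    Real.sin_pos_of_pos_of_lt_pi hθpos (by linarith [Real.pi_pos])
  have hc : 0 < Real.cos θ := Real.cos_pos_of_mem_Ioo ⟨by linarith, hθlt⟩
  have htan : Real.tan θ = Real.sqrt (m / M) := by rw [hθ, Real.tan_arctan]
  have htan2 : (Real.sin θ / Real.cos θ) ^ 2 = m / M := by
    rw [← Real.tan_eq_sin_div_cos, htan, Real.sq_sqrt (by positivity)]
  have hkey : M * Real.sin θ ^ 2 = m * Real.cos θ ^ 2 := by
    field_simp at htan2; linarith [htan2]
  have hpyth : Real.sin θ ^ 2 + Real.cos θ ^ 2 = 1 := Real.sin_sq_add_cos_sq θ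
  have hs2 : (M + m) * Real.sin θ ^ 2 = m := by nlinarith
  have hc2 : (M + m) * Real.cos θ ^ 2 = M := by nlinarith
  -- closed forms for the even-indexed velocities
  have main : ∀ k : ℕ, V (2 * k) = V 0 * Real.cos (2 * (k : ℝ) * θ) ∧
      v (2 * k) = -(V 0 * Real.cos θ * Real.sin (2 * (k : ℝ) * θ) / Real.sin θ) := by
    intro k
    induction k with
    | zero => simp [hv0]
    | succ n ih =>
      obtain ⟨h1, h2⟩ := ih
      obtain ⟨hb1, hb2⟩ := hBB n
      obtain ⟨hw1, hw2⟩ := hBW (n + 1) (Nat.le_add_left 1 n)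
      have hidx : 2 * (n + 1) - 1 = 2 * n + 1 := by omega
      rw [hidx] at hw1 hw2
      have hang : (2 * ((n:ℝ) + 1) * θ) = 2 * (n:ℝ) * θ + 2 * θ := by ring
      constructor
      · rw [hw1, hb1, h1, h2]
        push_cast
        rw [hang, Real.cos_add, Real.sin_two_mul, Real.cos_two_mul]
        field_simp
        linear_combination (-(2 * Real.cos (2 * (n:ℝ) * θ) * Real.sin θ)) * hc2
          + (2 * Real.sin (2 * (n:ℝ) * θ) * Real.cos θ) * hs2
      · rw [hw2, hb2, h1, h2]
        push_cast
        rw [hang, Real.sin_add, Real.sin_two_mul, Real.cos_two_mul]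
        field_simp
        linear_combination (2 * Real.cos θ * Real.sin (2 * (n:ℝ) * θ)
          + 2 * Real.sin θ * Real.cos (2 * (n:ℝ) * θ)) * hc2
  intro k
  obtain ⟨h1, h2⟩ := main k
  obtain ⟨hb1, hb2⟩ := hBB k
  have hrev : v (2 * k + 1) - V (2 * k + 1) = V (2 * k) - v (2 * k) := by
    rw [hb1, hb2]; field_simp; ring
  have hmain : V (2 * k) - v (2 * k)
      = V 0 * Real.sin ((2 * (k : ℝ) + 1) * θ) / Real.sin θ := by
    rw [h1, h2]
    have : (2 * (k:ℝ) + 1) * θ = 2 * (k:ℝ) * θ + θ := by ring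
    rw [this, Real.sin_add]
    field_simp
    ring
  exact ⟨hmain, by rw [hrev, hmain]⟩
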